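/- arXiv:1807.07755 — 4 statements merged into one kernel-verified Lean document; each statement's English description precedes it below -/
import Mathlib

section
/- Let σ be an involutive automorphism of a profinite group U which is a pro-p group for an odd prime p. Then the first nonabelian cohomology set H¹(⟨σ⟩, U) is trivial: every element u ∈ U with u·σ(u) = 1 can be written u = v·σ(v)⁻¹ for some v ∈ U. -/
/-- For an involutive continuous automorphism σ of a pro-p group U with p odd,
the first cohomology set H¹(⟨σ⟩, U) is trivial: every u with u·σ(u) = 1 is of the form
v·σ(v)⁻¹. -/
theorem stmt_1 (p : ℕ) (hp : Nat.Prime p) (hodd : Odd p)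
    (U : Type*) [Group U] [TopologicalSpace U] [IsTopologicalGroup U]
    [CompactSpace U] [TotallyDisconnectedSpace U] [T2Space U]
    (hpro : ∀ H : Subgroup U, H.Normal → IsOpen (H : Set U) →
      ∃ m : ℕ, Nat.card (U ⧸ H) = p ^ m)
    (σ : U →* U) (hσc : Continuous σ) (hσ2 : ∀ u, σ (σ u) = u)
    (u : U) (hu : u * σ u = 1) :
    ∃ v : U, u = v * (σ v)⁻¹ := by
  have hσu : σ u = u⁻¹ := eq_inv_of_mul_eq_one_right hu
  -- the closed sets
  set C : OpenNormalSubgroup U → Set U :=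
    fun N => {x | x ^ 2 * u⁻¹ ∈ N ∧ σ x * x ∈ N} with hC
  have hclosed : ∀ N, IsClosed (C N) := by
    intro N
    have hNc : IsClosed ((N : Subgroup U) : Set U) :=
      Subgroup.isClosed_of_isOpen _ N.toOpenSubgroup.isOpen
    have h1 : Continuous fun x : U => x ^ 2 * u⁻¹ := by continuity
    have h2 : Continuous fun x : U => σ x * x := by continuity
    exact (hNc.preimage h1).inter (hNc.preimage h2)
  have hne : ∀ N, (C N).Nonempty := by
    intro N
    obtain ⟨m, hm⟩ := hpro N N.isNormal' N.toOpenSubgroup.isOpen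
    have hfin : Finite (U ⧸ (N : Subgroup U)) := by
      refine Nat.finite_of_card_ne_zero ?_
      rw [hm]
      exact (pow_pos hp.pos m).ne'
    have hpm : u ^ (p ^ m) ∈ (N : Subgroup U) := by
      rw [← QuotientGroup.eq_one_iff, QuotientGroup.mk_pow, ← hm]
      exact pow_card_eq_one'
    have hoddpm : Odd (p ^ m) := hodd.pow
    obtain ⟨k, hk⟩ := hoddpm
    refine ⟨u ^ (k + 1), ?_, ?_⟩
    · have heq : (u ^ (k + 1)) ^ 2 * u⁻¹ = u ^ (p ^ m) := by
        rw [← pow_mul, hk]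
        rw [show (k + 1) * 2 = 2 * k + 1 + 1 by ring]
        rw [pow_succ, mul_inv_cancel_right]
      show (u ^ (k + 1)) ^ 2 * u⁻¹ ∈ (N : Subgroup U)
      rw [heq]
      exact hpm
    · show σ (u ^ (k + 1)) * u ^ (k + 1) ∈ (N : Subgroup U)
      rw [map_pow, hσu, inv_pow, inv_mul_cancel]
      exact one_mem _
  have hdir : Directed (· ⊇ ·) C := by
    intro N M
    exact ⟨N ⊓ M, fun x hx => ⟨hx.1.1, hx.2.1⟩, fun x hx => ⟨hx.1.2, hx.2.2⟩⟩
  have : Nonempty (OpenNormalSubgroup U) :=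
    ⟨⟨⟨⊤, by show IsOpen (Set.univ); exact isOpen_univ⟩, inferInstance⟩⟩
  obtain ⟨x, hx⟩ := IsCompact.nonempty_iInter_of_directed_nonempty_isCompact_isClosed
    C hdir hne (fun N => (hclosed N).isCompact) hclosed
  -- intersection of all open normal subgroups is trivial
  have hkey : ∀ y : U, (∀ N : OpenNormalSubgroup U, y ∈ (N : Subgroup U)) → y = 1 := by
    intro y hy
    by_contra hy1
    have : {y}ᶜ ∈ nhds (1 : U) := by
      refine IsOpen.mem_nhds isClosed_singleton.isOpen_compl ?_
      simp [Ne.symm hy1]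
    obtain ⟨W, ⟨h1W, hWclopen⟩, hWsub⟩ := (nhds_basis_clopen (1 : U)).mem_iff.mp this
    obtain ⟨H, hH⟩ :=
      IsTopologicalGroup.exist_openNormalSubgroup_sub_clopen_nhds_of_one hWclopen h1W
    exact (hWsub (hH (hy H))) rfl
  have hx2 : x ^ 2 * u⁻¹ = 1 := hkey _ fun N => ((Set.mem_iInter.mp hx N)).1
  have hxσ : σ x * x = 1 := hkey _ fun N => ((Set.mem_iInter.mp hx N)).2
  refine ⟨x, ?_⟩
  have hσx : (σ x)⁻¹ = x := inv_eq_of_mul_eq_one_right hxσ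
  rw [hσx, ← pow_two]
  exact (mul_inv_eq_one.mp hx2).symm
end

section
/- With F/F₀ quadratic with involution σ, T/F of degree t, and α an involution of T extending σ with fixed field T₀ satisfying T₀ ⊗_{F₀} F ≅ T, there exists an embedding of F-algebras ι : T → M_t(F) such that ι(α(x)) = σ(ι(x)) for all x ∈ T, where σ acts entrywise on M_t(F). In particular the image of ι is σ-stable. -/
open scoped TensorProduct


set_option synthInstance.maxHeartbeats 1000000 in
set_option maxHeartbeats 1000000 in
/-- Given the isomorphism T₀ ⊗_{F₀} F ≅ T, there is an embedding of F-algebras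
ι : T → M_t(F) with ι(α(x)) = σ(ι(x)) (entrywise σ); in particular the image of ι is
σ-stable. -/
theorem stmt_3 (F₀ F T : Type*) [Field F₀] [Field F] [Field T]
    [Algebra F₀ F] [Algebra F₀ T] [Algebra F T] [IsScalarTower F₀ F T]
    [FiniteDimensional F T]
    (hquad : Module.finrank F₀ F = 2)
    (σ : F ≃ₐ[F₀] F) (hσ : ∃ x, σ x ≠ x)
    (α : T ≃ₐ[F₀] T) (hα2 : ∀ x, α (α x) = x)
    (hext : ∀ x : F, α (algebraMap F T x) = algebraMap F T (σ x))
    (T₀ : Subalgebra F₀ T) (hT₀ : ∀ x : T, x ∈ T₀ ↔ α x = x)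
    (hiso : Function.Bijective
      ⇑(Algebra.TensorProduct.productMap T₀.val (IsScalarTower.toAlgHom F₀ F T)))
    (t : ℕ) (ht : Module.finrank F T = t) :
    ∃ ι : T →ₐ[F] Matrix (Fin t) (Fin t) F,
      Function.Injective ι ∧ ∀ x : T, ι (α x) = (ι x).map ⇑σ := by
  classical
  -- F is finite dimensional over F₀
  have hF : FiniteDimensional F₀ F := FiniteDimensional.of_finrank_pos (by omega)
  have hT : FiniteDimensional F₀ T := FiniteDimensional.trans F₀ F T
  have hT₀fd : FiniteDimensional F₀ T₀ := FiniteDimensional.finiteDimensional_submodule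
    (Subalgebra.toSubmodule T₀)
  set n := Module.finrank F₀ (↥T₀) with hn
  let b0 : Module.Basis (Fin n) F₀ T₀ := Module.finBasis F₀ T₀
  -- the bijective algebra hom
  set P := Algebra.TensorProduct.productMap T₀.val (IsScalarTower.toAlgHom F₀ F T) with hP
  -- F-linear version on F ⊗[F₀] T₀
  let g : F ⊗[F₀] ↥T₀ →ₗ[F₀] T :=
    P.toLinearMap ∘ₗ (TensorProduct.comm F₀ F ↥T₀).toLinearMap
  have hg : ∀ (c : F) (z : F ⊗[F₀] ↥T₀), g (c • z) = c • g z := by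
    intro c z
    induction z using TensorProduct.induction_on with
    | zero => simp only [smul_zero, map_zero]
    | tmul f m =>
        simp only [g, TensorProduct.smul_tmul', LinearMap.comp_apply,
          LinearEquiv.coe_coe, TensorProduct.comm_tmul, AlgHom.toLinearMap_apply, hP,
          Algebra.TensorProduct.productMap_apply_tmul]
        simp only [smul_eq_mul, map_mul, Algebra.smul_def,
          IsScalarTower.coe_toAlgHom']
        ring
    | add x y hx hy => rw [smul_add, map_add, map_add, hx, hy, smul_add]
  let g' : F ⊗[F₀] ↥T₀ →ₗ[F] T :=
    { toFun := g, map_add' := map_add g, map_smul' := hg }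
  have hg'bij : Function.Bijective g' := by
    have : Function.Bijective (⇑P ∘ ⇑(TensorProduct.comm F₀ F ↥T₀)) :=
      hiso.comp (TensorProduct.comm F₀ F ↥T₀).bijective
    exact this
  let e : (F ⊗[F₀] ↥T₀) ≃ₗ[F] T := LinearEquiv.ofBijective g' hg'bij
  -- the basis of T over F consisting of elements of T₀
  let bT : Module.Basis (Fin n) F T := (b0.baseChange F).map e
  have hbT : ∀ i, (bT i : T) = (b0 i : T) := by
    intro i
    show e ((b0.baseChange F) i) = _
    rw [Module.Basis.baseChange_apply]
    show g' ((1 : F) ⊗ₜ b0 i) = _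
    show g ((1 : F) ⊗ₜ b0 i) = _
    simp [g, hP]
  have hnt : n = t := by
    rw [← ht, Module.finrank_eq_card_basis bT, Fintype.card_fin]
  let b : Module.Basis (Fin t) F T := bT.reindex (finCongr hnt)
  have hbfix : ∀ i, α (b i) = b i := by
    intro i
    have : b i ∈ T₀ := by
      rw [Module.Basis.reindex_apply, hbT]
      exact (b0 ((finCongr hnt).symm i)).2
    exact (hT₀ _).mp this
  -- key lemma : coordinates of α y are σ of coordinates of y
  have key : ∀ (y : T) (i : Fin t), b.repr (α y) i = σ (b.repr y i) := by
    intro y i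
    have hy : α y = b.equivFun.symm (fun k => σ (b.repr y k)) := by
      rw [Module.Basis.equivFun_symm_apply]
      conv_lhs => rw [← b.sum_repr y]
      rw [map_sum]
      refine Finset.sum_congr rfl fun k _ => ?_
      rw [Algebra.smul_def, map_mul, hext, hbfix, ← Algebra.smul_def]
    have := congrFun (b.equivFun.apply_symm_apply (fun k => σ (b.repr y k))) i
    rw [← hy, Module.Basis.equivFun_apply] at this
    exact this
  refine ⟨Algebra.leftMulMatrix b, ?_, ?_⟩
  · have : Nontrivial (Matrix (Fin t) (Fin t) F) := by
      have : 0 < t := ht ▸ Module.finrank_pos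
      have : Nonempty (Fin t) := ⟨⟨0, this⟩⟩
      infer_instance
    exact (Algebra.leftMulMatrix b).toRingHom.injective
  · intro x
    ext i j
    rw [Matrix.map_apply, Algebra.leftMulMatrix_eq_repr_mul, Algebra.leftMulMatrix_eq_repr_mul]
    rw [show α x * b j = α (x * b j) by rw [map_mul, hbfix]]
    exact key _ _
end

section
/- Let G be a locally profinite group, σ a continuous involution of G, K a σ-stable open subgroup, N a σ-stable subgroup that is an increasing union of σ-stable pro-p subgroups for an odd prime p, and g ∈ G. (i) If the double coset NgK is σ-stable then it contains a σ-stable left K-coset. (ii) If gK is σ-stable, then every σ-stable left K-coset contained in NgK lies in N^σ·g·K, where N^σ is the σ-fixed subgroup of N. (iii) (NK)^σ = N^σ·K^σ. -/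
open Pointwise

/-- A (topological) group is pro-p if it is profinite and every open normal subgroup
has index a power of p. -/
def IsProP (p : ℕ) (U : Type*) [Group U] [TopologicalSpace U] : Prop :=
  CompactSpace U ∧ TotallyDisconnectedSpace U ∧ T2Space U ∧ IsTopologicalGroup U ∧
    ∀ H : Subgroup U, H.Normal → IsOpen (H : Set U) →
      ∃ m : ℕ, Nat.card (U ⧸ H) = p ^ m

/-! ### Auxiliary lemmas -/

section Involution

/-- An involution of a finite set of odd cardinality has a fixed point. -/
lemma aux_invol_fixed {α : Type*} [Finite α] (f : α → α)
    (hf : Function.Involutive f) (hodd : Odd (Nat.card α)) : ∃ a, f a = a := by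
  classical
  let π : Equiv.Perm α := hf.toPerm f
  have hπ2 : π ^ 2 = 1 := by
    ext a
    simpa [π, sq] using hf a
  haveI : Fact (Nat.Prime 2) := ⟨Nat.prime_two⟩
  have hPG : IsPGroup 2 (Subgroup.zpowers π) := by
    rintro ⟨x, hx⟩
    obtain ⟨n, rfl⟩ := Subgroup.mem_zpowers_iff.mp hx
    refine ⟨1, ?_⟩
    have h2 : (π ^ n) ^ (2 : ℕ) = 1 := by
      rw [← zpow_natCast (π ^ n) 2, ← zpow_mul, mul_comm, zpow_mul, zpow_natCast, hπ2, one_zpow]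
    ext1
    simpa using h2
  have h2 : ¬ (2 ∣ Nat.card α) := by
    rcases hodd with ⟨k, hk⟩
    omega
  obtain ⟨a, ha⟩ := hPG.nonempty_fixed_point_of_prime_not_dvd_card α h2
  refine ⟨a, ?_⟩
  have := MulAction.mem_fixedPoints.mp ha ⟨π, Subgroup.mem_zpowers π⟩
  simpa [π, Equiv.Perm.smul_def] using this

end Involution

section ProfiniteAux

variable {P : Type*} [Group P] [TopologicalSpace P] [IsTopologicalGroup P]
    [CompactSpace P] [TotallyDisconnectedSpace P] [T2Space P]

/-- In a profinite group, every open neighbourhood of `1` contains an open normal subgroup. -/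
lemma aux_openNormal {U : Set P} (hU : IsOpen U) (h1 : (1 : P) ∈ U) :
    ∃ W : OpenNormalSubgroup P, (W : Set P) ⊆ U := by
  obtain ⟨V, hV, h1V, hVU⟩ := compact_exists_isClopen_in_isOpen hU h1
  obtain ⟨W, hW⟩ := IsTopologicalGroup.exist_openNormalSubgroup_sub_clopen_nhds_of_one hV h1V
  exact ⟨W, hW.trans hVU⟩

variable {p : ℕ} (hp : p.Prime) (hodd : Odd p)
    (hind : ∀ H : Subgroup P, H.Normal → IsOpen (H : Set P) →
      ∃ m : ℕ, Nat.card (P ⧸ H) = p ^ m)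

include hp hodd hind

/-- A pro-p group with p odd has no 2-torsion. -/
lemma aux_no2torsion (t : P) (ht : t * t = 1) : t = 1 := by
  by_contra hne
  have h1 : (1 : P) ∈ ({t}ᶜ : Set P) := by
    simp only [Set.mem_compl_iff, Set.mem_singleton_iff]
    exact fun h => hne h.symm
  obtain ⟨W, hW⟩ := aux_openNormal (isOpen_compl_singleton) h1
  obtain ⟨m, hm⟩ := hind W.toSubgroup W.isNormal' W.toOpenSubgroup.isOpen
  haveI : Finite (P ⧸ W.toSubgroup) := by
    refine Nat.finite_of_card_ne_zero ?_
    rw [hm]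
    exact pow_ne_zero _ hp.ne_zero
  set tb : P ⧸ W.toSubgroup := QuotientGroup.mk t with htb
  have htb1 : tb ≠ 1 := by
    rw [htb, Ne, QuotientGroup.eq_one_iff]
    intro hmem
    exact hW hmem rfl
  have htb2 : tb ^ 2 = 1 := by
    rw [htb, sq, ← QuotientGroup.mk_mul, ht, QuotientGroup.mk_one]
  haveI : Fact (Nat.Prime 2) := ⟨Nat.prime_two⟩
  have horder : orderOf tb = 2 := orderOf_eq_prime htb2 htb1
  have hdvd : 2 ∣ p ^ m := by
    rw [← hm, ← horder]
    exact orderOf_dvd_natCard tb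
  have h2p : 2 ∣ p := Nat.Prime.dvd_of_dvd_pow Nat.prime_two hdvd
  rcases hodd with ⟨k, hk⟩
  omega

/-- Every open subgroup of a pro-p group (p odd) has odd, nonzero index. -/
lemma aux_odd_index (V : Subgroup P) (hV : IsOpen (V : Set P)) :
    Odd V.index ∧ V.index ≠ 0 := by
  obtain ⟨W, hW⟩ := aux_openNormal hV V.one_mem
  have hle : W.toSubgroup ≤ V := hW
  obtain ⟨m, hm⟩ := hind W.toSubgroup W.isNormal' W.toOpenSubgroup.isOpen
  have hWi : W.toSubgroup.index = p ^ m := by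
    rw [Subgroup.index_eq_card, hm]
  have hdvd : V.index ∣ p ^ m := hWi ▸ Subgroup.index_dvd_of_le hle
  have hoddpm : Odd (p ^ m) := hodd.pow
  constructor
  · rcases Nat.even_or_odd V.index with he | ho
    · exfalso
      rcases he with ⟨c, hc⟩
      have : 2 ∣ p ^ m := dvd_trans ⟨c, by omega⟩ hdvd
      rcases hoddpm with ⟨k, hk⟩
      omega
    · exact ho
  · intro h0
    rw [h0] at hdvd
    have : p ^ m = 0 := Nat.eq_zero_of_zero_dvd hdvd
    exact pow_ne_zero m hp.ne_zero this

/-- In a pro-p group with p odd, every element lies in the closure of the subgroup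
generated by its square. -/
lemma aux_mem_closure_sq (u : P) :
    u ∈ closure ((Subgroup.zpowers (u * u) : Subgroup P) : Set P) := by
  rw [mem_closure_iff]
  intro O hO huO
  have h1 : (1 : P) ∈ (fun x => u * x) ⁻¹' O := by simpa using huO
  obtain ⟨W, hW⟩ := aux_openNormal (hO.preimage (continuous_mul_left u)) h1
  obtain ⟨m, hm⟩ := hind W.toSubgroup W.isNormal' W.toOpenSubgroup.isOpen
  haveI : Finite (P ⧸ W.toSubgroup) := by
    refine Nat.finite_of_card_ne_zero ?_
    rw [hm]
    exact pow_ne_zero _ hp.ne_zero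
  obtain ⟨s, hs⟩ := hodd.pow (n := m)
  -- p ^ m = 2 * s + 1
  have hcard : (QuotientGroup.mk u : P ⧸ W.toSubgroup) ^ (p ^ m) = 1 := by
    rw [← hm]
    haveI : Fintype (P ⧸ W.toSubgroup) := Fintype.ofFinite _
    rw [Nat.card_eq_fintype_card]
    exact pow_card_eq_one
  have key : (QuotientGroup.mk ((u * u) ^ (s + 1)) : P ⧸ W.toSubgroup) = QuotientGroup.mk u := by
    have e0 : (u * u) ^ (s + 1) = u ^ (2 * (s + 1)) := by
      rw [← sq, ← pow_mul]
    have e1 : (QuotientGroup.mk ((u * u) ^ (s + 1)) : P ⧸ W.toSubgroup)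
        = (QuotientGroup.mk u : P ⧸ W.toSubgroup) ^ (2 * (s + 1)) := by
      rw [e0]
      exact map_pow (QuotientGroup.mk' W.toSubgroup) u (2 * (s + 1))
    rw [e1]
    have e2 : 2 * (s + 1) = (p ^ m) + 1 := by omega
    rw [e2, pow_add, hcard, one_mul, pow_one]
  have hmemW : u⁻¹ * (u * u) ^ (s + 1) ∈ W.toSubgroup := by
    rw [← QuotientGroup.eq]
    exact key.symm
  refine ⟨(u * u) ^ (s + 1), ?_, ?_⟩
  · have := hW hmemW
    simpa using this
  · exact Subgroup.pow_mem _ (Subgroup.mem_zpowers _) _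

/-- Triviality of H¹ for pro-p groups with p odd: a continuous involutive cocycle is a
coboundary from the closure of the cyclic group generated by the cocycle. -/
lemma aux_H1 (τ : P →* P) (hτc : Continuous τ) (hτ2 : ∀ x, τ (τ x) = x) (u : P)
    (hu : τ u = u⁻¹) :
    ∃ w ∈ closure ((Subgroup.zpowers u : Subgroup P) : Set P), τ w = u⁻¹ * w := by
  set Z : Subgroup P := Subgroup.zpowers u with hZ
  -- commutativity of the closure
  have hZc : ∀ a ∈ (Z : Set P), ∀ b ∈ (Z : Set P), a * b = b * a := by
    intro a ha b hb
    obtain ⟨ma, rfl⟩ := Subgroup.mem_zpowers_iff.mp ha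
    obtain ⟨mb, rfl⟩ := Subgroup.mem_zpowers_iff.mp hb
    rw [← zpow_add, ← zpow_add, add_comm]
  have hAcomm : ∀ x ∈ closure (Z : Set P), ∀ y ∈ closure (Z : Set P), x * y = y * x := by
    intro x hx y hy
    have step1 : ∀ b ∈ (Z : Set P), x * b = b * x := by
      intro b hb
      have hcl : IsClosed {z : P | z * b = b * z} :=
        isClosed_eq (continuous_mul_right b) (continuous_mul_left b)
      exact closure_minimal (fun a ha => hZc a ha b hb) hcl hx
    have hcl2 : IsClosed {z : P | x * z = z * x} :=
      isClosed_eq (continuous_mul_left x) (continuous_mul_right x)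
    exact closure_minimal (fun b hb => step1 b hb) hcl2 hy
  have hcomp : IsCompact (closure (Z : Set P)) := isClosed_closure.isCompact
  set S : Set P := (fun a : P => a * a) '' closure (Z : Set P) with hS
  have hSclosed : IsClosed S :=
    (hcomp.image (continuous_id.mul continuous_id)).isClosed
  have hZsubS : ((Subgroup.zpowers (u * u) : Subgroup P) : Set P) ⊆ S := by
    intro x hx
    obtain ⟨n, rfl⟩ := Subgroup.mem_zpowers_iff.mp hx
    refine ⟨u ^ n, subset_closure (Subgroup.zpow_mem Z (Subgroup.mem_zpowers u) n), ?_⟩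
    show u ^ n * u ^ n = (u * u) ^ n
    exact ((Commute.refl u).mul_zpow n).symm
  have huS : u ∈ S :=
    closure_minimal hZsubS hSclosed (aux_mem_closure_sq hp hodd hind u)
  obtain ⟨a, haA, ha2⟩ := huS
  replace ha2 : a * a = u := ha2
  -- τ preserves the closure
  have hτA : ∀ x ∈ closure (Z : Set P), τ x ∈ closure (Z : Set P) := by
    intro x hx
    have h2 : τ '' (Z : Set P) ⊆ (Z : Set P) := by
      rintro y ⟨z, hz, rfl⟩
      obtain ⟨n, rfl⟩ := Subgroup.mem_zpowers_iff.mp hz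
      rw [map_zpow, hu]
      exact Subgroup.zpow_mem Z (Z.inv_mem (Subgroup.mem_zpowers u)) n
    have h3 : closure (τ '' (Z : Set P)) ⊆ closure (Z : Set P) := closure_mono h2
    exact h3 (image_closure_subset_closure_image hτc ⟨x, hx, rfl⟩)
  have hτa : τ a ∈ closure (Z : Set P) := hτA a haA
  have hc : a * τ a = τ a * a := hAcomm a haA (τ a) hτa
  have ht : (a * τ a) * (a * τ a) = 1 := by
    have e1 : (a * τ a) * (a * τ a) = (a * a) * (τ a * τ a) := by
      calc (a * τ a) * (a * τ a) = a * (τ a * a) * τ a := by group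
        _ = a * (a * τ a) * τ a := by rw [← hc]
        _ = (a * a) * (τ a * τ a) := by group
    rw [e1, ha2, ← map_mul, ha2, hu, mul_inv_cancel]
  have hta1 : a * τ a = 1 := aux_no2torsion hp hodd hind _ ht
  have hτa' : τ a = a⁻¹ := by
    have e : τ a = a⁻¹ * (a * τ a) := by group
    rw [e, hta1, mul_one]
  refine ⟨a, haA, ?_⟩
  rw [hτa', ← ha2]
  group

end ProfiniteAux

section SetAux

variable {G : Type*} [Group G]

lemma aux_mem_coset {K : Subgroup G} {a x : G} :
    x ∈ ({a} : Set G) * (K : Set G) ↔ a⁻¹ * x ∈ K := by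
  rw [Set.singleton_mul]
  constructor
  · rintro ⟨k, hk, rfl⟩
    simpa using hk
  · intro h
    exact ⟨a⁻¹ * x, h, by group⟩

lemma aux_coset_eq {K : Subgroup G} {a b : G} (hab : a⁻¹ * b ∈ K) :
    ({a} : Set G) * (K : Set G) = ({b} : Set G) * (K : Set G) := by
  ext x
  rw [aux_mem_coset, aux_mem_coset]
  constructor
  · intro hx
    have := K.mul_mem (K.inv_mem hab) hx
    simpa [mul_assoc] using this
  · intro hx
    have := K.mul_mem hab hx
    simpa [mul_assoc] using this

lemma aux_mem_mul3 {A C : Set G} {g x : G} :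
    x ∈ A * {g} * C ↔ ∃ a ∈ A, ∃ c ∈ C, x = a * g * c := by
  constructor
  · rintro ⟨y, hy, c, hc, rfl⟩
    rcases hy with ⟨a, ha, g', hg', rfl⟩
    rcases hg' with rfl
    exact ⟨a, ha, c, hc, rfl⟩
  · rintro ⟨a, ha, c, hc, rfl⟩
    exact ⟨a * g, ⟨a, ha, g, rfl, rfl⟩, c, hc, rfl⟩

end SetAux

section Conj

variable {G : Type*} [Group G]

/-- The conjugate `g K g⁻¹` of a subgroup. -/
def conjSub (K : Subgroup G) (g : G) : Subgroup G where
  carrier := {x | g⁻¹ * x * g ∈ K}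
  one_mem' := by simpa using K.one_mem
  mul_mem' := by
    intro a b ha hb
    have := K.mul_mem ha hb
    simpa [mul_assoc] using this
  inv_mem' := by
    intro a ha
    have := K.inv_mem ha
    simpa [mul_assoc] using this

lemma mem_conjSub {K : Subgroup G} {g x : G} : x ∈ conjSub K g ↔ g⁻¹ * x * g ∈ K := Iff.rfl

end Conj

/-! ### Part (ii) as a standalone lemma -/

section PartII

variable {G : Type*} [Group G] [TopologicalSpace G] [IsTopologicalGroup G]

lemma part_ii (σ : G →* G) (hσc : Continuous σ) (hσ2 : ∀ g, σ (σ g) = g)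
    (p : ℕ) (hp : Nat.Prime p) (hodd : Odd p)
    (K : Subgroup G) (hKo : IsOpen (K : Set G)) (hKσ : ∀ x ∈ K, σ x ∈ K)
    (N : Subgroup G) (hNσ : ∀ x ∈ N, σ x ∈ N)
    (hNpro : ∀ u ∈ N, ∃ N₀ : Subgroup G, u ∈ N₀ ∧ N₀ ≤ N ∧
      (∀ x ∈ N₀, σ x ∈ N₀) ∧ IsProP p ↥N₀)
    (g : G)
    (hgK : σ '' (({g} : Set G) * (K : Set G)) = ({g} : Set G) * (K : Set G))
    (h : G) (hhsub : ({h} : Set G) * (K : Set G) ⊆ (N : Set G) * {g} * (K : Set G))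
    (hhK : σ '' (({h} : Set G) * (K : Set G)) = ({h} : Set G) * (K : Set G)) :
    h ∈ {x ∈ (N : Set G) | σ x = x} * {g} * (K : Set G) := by
  -- σ g = g * k₂ for some k₂ ∈ K
  have hgmem : g ∈ ({g} : Set G) * (K : Set G) := aux_mem_coset.mpr (by simpa using K.one_mem)
  have hσg_mem : σ g ∈ ({g} : Set G) * (K : Set G) := hgK ▸ ⟨g, hgmem, rfl⟩
  have hk₂ : g⁻¹ * σ g ∈ K := aux_mem_coset.mp hσg_mem
  set k₂ := g⁻¹ * σ g with hk₂def
  have hσg : σ g = g * k₂ := by rw [hk₂def]; group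
  -- h = n * g * k
  have hhmem : h ∈ ({h} : Set G) * (K : Set G) := aux_mem_coset.mpr (by simpa using K.one_mem)
  obtain ⟨n, hn, k, hk, hh⟩ := aux_mem_mul3.mp (hhsub hhmem)
  -- σ h = h * k₁
  have hσh_mem : σ h ∈ ({h} : Set G) * (K : Set G) := hhK ▸ ⟨h, hhmem, rfl⟩
  have hk₁ : h⁻¹ * σ h ∈ K := aux_mem_coset.mp hσh_mem
  set k₁ := h⁻¹ * σ h with hk₁def
  have hσh : σ h = h * k₁ := by rw [hk₁def]; group
  -- the cocycle u
  set u := n⁻¹ * σ n with hudef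
  have huN : u ∈ N := N.mul_mem (N.inv_mem hn) (hNσ n hn)
  have hσu : σ u = u⁻¹ := by
    rw [hudef, map_mul, map_inv, hσ2]
    group
  have hσn : σ n = n * u := by rw [hudef]; group
  -- u ∈ g K g⁻¹
  have hugKg : g⁻¹ * u * g ∈ K := by
    have e1 : σ n * (g * k₂) * σ k = n * g * k * k₁ := by
      have h1 : σ h = σ n * σ g * σ k := by rw [hh, map_mul, map_mul]
      rw [hσg] at h1
      rw [← h1, hσh, hh]
    have e2 : g⁻¹ * u * g = k * k₁ * (σ k)⁻¹ * k₂⁻¹ := by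
      calc g⁻¹ * u * g
          = g⁻¹ * n⁻¹ * (σ n * (g * k₂) * σ k) * (σ k)⁻¹ * k₂⁻¹ := by rw [hudef]; group
        _ = g⁻¹ * n⁻¹ * (n * g * k * k₁) * (σ k)⁻¹ * k₂⁻¹ := by rw [e1]
        _ = k * k₁ * (σ k)⁻¹ * k₂⁻¹ := by group
    rw [e2]
    exact K.mul_mem (K.mul_mem (K.mul_mem hk hk₁) (K.inv_mem (hKσ k hk))) (K.inv_mem hk₂)
  -- pass to a σ-stable pro-p subgroup containing u
  obtain ⟨N₀, huN₀, hN₀N, hN₀σ, hPro⟩ := hNpro u huN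
  obtain ⟨hc, htd, ht2, htg, hindN₀⟩ := hPro
  haveI := hc; haveI := htd; haveI := ht2; haveI := htg
  -- the restricted involution
  set τ : ↥N₀ →* ↥N₀ :=
    { toFun := fun x => ⟨σ x, hN₀σ x x.2⟩
      map_one' := by ext; simp
      map_mul' := by intro x y; ext; simp } with hτdef
  have hτc : Continuous τ := Continuous.subtype_mk (hσc.comp continuous_subtype_val) _
  have hτ2 : ∀ x : ↥N₀, τ (τ x) = x := by
    intro x
    ext
    exact hσ2 x
  set u' : ↥N₀ := ⟨u, huN₀⟩ with hu'def
  have hτu' : τ u' = u'⁻¹ := by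
    ext
    exact hσu
  obtain ⟨w', hw'cl, hτw'⟩ := aux_H1 hp hodd hindN₀ τ hτc hτ2 u' hτu'
  set w : G := (w' : G) with hwdef
  have hσw : σ w = u⁻¹ * w := by
    have := congrArg (Subtype.val) hτw'
    exact this
  have hwN : w ∈ N := hN₀N w'.2
  have hwK : g⁻¹ * w * g ∈ K := by
    have hsub : ((Subgroup.zpowers u' : Subgroup ↥N₀) : Set ↥N₀)
        ⊆ (fun z : ↥N₀ => g⁻¹ * (z : G) * g) ⁻¹' (K : Set G) := by
      intro z hz
      obtain ⟨mz, rfl⟩ := Subgroup.mem_zpowers_iff.mp hz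
      have hcoe : ((u' ^ mz : ↥N₀) : G) = u ^ mz := by
        push_cast
        rfl
      simp only [Set.mem_preimage, hcoe]
      have hconj : g⁻¹ * u ^ mz * g = (g⁻¹ * u * g) ^ mz := by
        have := conj_zpow (i := mz) (a := g⁻¹) (b := u)
        simpa using this.symm
      rw [hconj]
      exact K.zpow_mem hugKg mz
    have hclosed : IsClosed ((fun z : ↥N₀ => g⁻¹ * (z : G) * g) ⁻¹' (K : Set G)) := by
      refine IsClosed.preimage ?_ (K.isClosed_of_isOpen hKo)
      exact (continuous_const.mul continuous_subtype_val).mul continuous_const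
    exact closure_minimal hsub hclosed hw'cl
  -- the σ-fixed element
  set n' := n * w with hn'def
  have hσn' : σ n' = n' := by
    rw [hn'def, map_mul, hσw, hσn]
    group
  have hn'N : n' ∈ N := N.mul_mem hn hwN
  refine aux_mem_mul3.mpr ⟨n', ⟨hn'N, hσn'⟩, (g⁻¹ * w * g)⁻¹ * k, K.mul_mem (K.inv_mem hwK) hk, ?_⟩
  rw [hh, hn'def]
  group

end PartII

/-! ### Main theorem -/

/-- With K a σ-stable open subgroup and N a σ-stable subgroup which is a union
of σ-stable pro-p subgroups (p odd): (i) a σ-stable double coset NgK contains a σ-stable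
left K-coset; (ii) if gK is σ-stable, every σ-stable left K-coset in NgK lies in N^σ·g·K;
(iii) (NK)^σ = N^σ·K^σ. -/
theorem stmt_5 (G : Type*) [Group G] [TopologicalSpace G] [IsTopologicalGroup G]
    (σ : G →* G) (hσc : Continuous σ) (hσ2 : ∀ g, σ (σ g) = g)
    (p : ℕ) (hp : Nat.Prime p) (hodd : Odd p)
    (K : Subgroup G) (hKo : IsOpen (K : Set G)) (hKσ : ∀ x ∈ K, σ x ∈ K)
    (N : Subgroup G) (hNcl : IsClosed (N : Set G)) (hNσ : ∀ x ∈ N, σ x ∈ N)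
    (hNpro : ∀ u ∈ N, ∃ N₀ : Subgroup G, u ∈ N₀ ∧ N₀ ≤ N ∧
      (∀ x ∈ N₀, σ x ∈ N₀) ∧ IsProP p ↥N₀)
    (g : G) :
    ((σ '' ((N : Set G) * {g} * (K : Set G)) = (N : Set G) * {g} * (K : Set G)) →
      ∃ h ∈ (N : Set G) * {g} * (K : Set G),
        σ '' ({h} * (K : Set G)) = {h} * (K : Set G)) ∧
    ((σ '' ({g} * (K : Set G)) = {g} * (K : Set G)) →
      ∀ h : G, {h} * (K : Set G) ⊆ (N : Set G) * {g} * (K : Set G) →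
        σ '' ({h} * (K : Set G)) = {h} * (K : Set G) →
        h ∈ {x ∈ (N : Set G) | σ x = x} * {g} * (K : Set G)) ∧
    ({x ∈ (N : Set G) * (K : Set G) | σ x = x}
      = {x ∈ (N : Set G) | σ x = x} * {x ∈ (K : Set G) | σ x = x}) := by
  have hKim : σ '' (K : Set G) = (K : Set G) := by
    apply Set.Subset.antisymm
    · rintro _ ⟨y, hy, rfl⟩
      exact hKσ y hy
    · intro y hy
      exact ⟨σ y, hKσ y hy, hσ2 y⟩
  have himage_coset : ∀ a : G, σ '' (({a} : Set G) * (K : Set G))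
      = ({σ a} : Set G) * (K : Set G) := by
    intro a
    rw [Set.image_mul σ, Set.image_singleton, hKim]
  -- ===== Part (i) =====
  have part_i : (σ '' ((N : Set G) * {g} * (K : Set G)) = (N : Set G) * {g} * (K : Set G)) →
      ∃ h ∈ (N : Set G) * {g} * (K : Set G),
        σ '' ({h} * (K : Set G)) = {h} * (K : Set G) := by
    intro hyp
    -- σ g ∈ N g K
    have hgmem : g ∈ (N : Set G) * {g} * (K : Set G) :=
      aux_mem_mul3.mpr ⟨1, N.one_mem, 1, K.one_mem, by group⟩
    have hσg_mem : σ g ∈ (N : Set G) * {g} * (K : Set G) := hyp ▸ ⟨g, hgmem, rfl⟩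
    obtain ⟨n, hn, k₀, hk₀, hσg⟩ := aux_mem_mul3.mp hσg_mem
    obtain ⟨N₀, hnN₀, hN₀N, hN₀σ, hPro⟩ := hNpro n hn
    obtain ⟨hc, htd, ht2, htg, hindN₀⟩ := hPro
    haveI := hc; haveI := htd; haveI := ht2; haveI := htg
    -- the restricted involution
    set τ : ↥N₀ →* ↥N₀ :=
      { toFun := fun x => ⟨σ x, hN₀σ x x.2⟩
        map_one' := by ext; simp
        map_mul' := by intro x y; ext; simp } with hτdef
    set n' : ↥N₀ := ⟨n, hnN₀⟩ with hn'def
    -- the open subgroup V = N₀ ∩ g K g⁻¹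
    set V : Subgroup ↥N₀ := (conjSub K g).comap N₀.subtype with hVdef
    have hVo : IsOpen (V : Set ↥N₀) := by
      have : IsOpen ((conjSub K g : Subgroup G) : Set G) := by
        have : ((conjSub K g : Subgroup G) : Set G)
            = (fun x => g⁻¹ * x * g) ⁻¹' (K : Set G) := rfl
        rw [this]
        exact hKo.preimage ((continuous_const.mul continuous_id).mul continuous_const)
      exact this.preimage continuous_subtype_val
    obtain ⟨hVodd, hVne⟩ := aux_odd_index hp hodd hindN₀ V hVo
    haveI : Finite (↥N₀ ⧸ V) := by
      refine Nat.finite_of_card_ne_zero ?_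
      rw [← Subgroup.index_eq_card]
      exact hVne
    have hQodd : Odd (Nat.card (↥N₀ ⧸ V)) := by
      rwa [← Subgroup.index_eq_card]
    -- conjugation stability of V
    have hVconj : ∀ v : ↥N₀, v ∈ V → n'⁻¹ * τ v * n' ∈ V := by
      intro v hv
      have hv' : g⁻¹ * (v : G) * g ∈ K := hv
      have h1 : σ (g⁻¹ * (v : G) * g) ∈ K := hKσ _ hv'
      have h2 : g⁻¹ * (n⁻¹ * σ (v : G) * n) * g = k₀ * σ (g⁻¹ * (v : G) * g) * k₀⁻¹ := by
        have e : σ (g⁻¹ * (v : G) * g) = (σ g)⁻¹ * σ (v : G) * σ g := by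
          rw [map_mul, map_mul, map_inv]
        rw [e, hσg]
        group
      show g⁻¹ * ((n'⁻¹ * τ v * n' : ↥N₀) : G) * g ∈ K
      have hcoe : ((n'⁻¹ * τ v * n' : ↥N₀) : G) = n⁻¹ * σ (v : G) * n := rfl
      rw [hcoe, h2]
      exact K.mul_mem (K.mul_mem hk₀ h1) (K.inv_mem hk₀)
    -- τ n' * n' ∈ V
    have hτnn : τ n' * n' ∈ V := by
      show g⁻¹ * ((τ n' * n' : ↥N₀) : G) * g ∈ K
      have hcoe : ((τ n' * n' : ↥N₀) : G) = σ n * n := rfl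
      rw [hcoe]
      have hsg : σ (σ g) = σ n * σ g * σ k₀ := by rw [hσg, map_mul, map_mul, hσg]
      have h : g = σ n * (n * g * k₀) * σ k₀ := by
        conv_lhs => rw [← hσ2 g]
        rw [hsg, hσg]
      have h2 : σ n * n * (g * (k₀ * σ k₀)) = g := by
        conv_rhs => rw [h]
        group
      have key : g⁻¹ * (σ n * n) * g = (k₀ * σ k₀)⁻¹ := by
        calc g⁻¹ * (σ n * n) * g
            = g⁻¹ * (σ n * n * (g * (k₀ * σ k₀))) * (k₀ * σ k₀)⁻¹ := by group
          _ = g⁻¹ * g * (k₀ * σ k₀)⁻¹ := by rw [h2]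
          _ = (k₀ * σ k₀)⁻¹ := by group
      rw [key]
      exact K.inv_mem (K.mul_mem hk₀ (hKσ k₀ hk₀))
    -- the involution on the quotient
    have hwd : ∀ x y : ↥N₀, (QuotientGroup.leftRel V) x y →
        (QuotientGroup.leftRel V) (τ x * n') (τ y * n') := by
      intro x y hxy
      rw [QuotientGroup.leftRel_apply] at hxy ⊢
      have e : (τ x * n')⁻¹ * (τ y * n') = n'⁻¹ * τ (x⁻¹ * y) * n' := by
        rw [map_mul, map_inv]
        group
      rw [e]
      exact hVconj _ hxy
    set f : (↥N₀ ⧸ V) → (↥N₀ ⧸ V) := Quotient.map' (fun x => τ x * n') hwd with hfdef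
    have hfinv : Function.Involutive f := by
      intro q
      induction q using Quotient.inductionOn' with
      | h x =>
        show Quotient.mk'' (τ (τ x * n') * n') = Quotient.mk'' x
        have hττ : τ (τ x) = x := by ext; exact hσ2 (x : G)
        have e : τ (τ x * n') * n' = x * (τ n' * n') := by
          rw [map_mul, hττ]
          group
        rw [e]
        apply Quotient.sound'
        rw [QuotientGroup.leftRel_apply]
        have : (x * (τ n' * n'))⁻¹ * x = (τ n' * n')⁻¹ := by group
        rw [this]
        exact V.inv_mem hτnn
    obtain ⟨q, hq⟩ := aux_invol_fixed f hfinv hQodd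
    obtain ⟨x, rfl⟩ := Quotient.exists_rep q
    have hfix : (τ x * n')⁻¹ * x ∈ V := by
      have : Quotient.mk'' (τ x * n') = Quotient.mk'' x := hq
      rw [Quotient.eq''] at this
      rw [← QuotientGroup.leftRel_apply]
      exact this
    -- the fixed coset
    have hfixG : g⁻¹ * (n⁻¹ * (σ (x : G))⁻¹ * (x : G)) * g ∈ K := by
      have hcoe : (((τ x * n')⁻¹ * x : ↥N₀) : G) = n⁻¹ * (σ (x : G))⁻¹ * (x : G) := by
        show (σ (x:G) * n)⁻¹ * (x:G) = n⁻¹ * (σ (x : G))⁻¹ * (x : G)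
        group
      have := hfix
      show _ ∈ K
      rw [← hcoe]
      exact this
    refine ⟨(x : G) * g, aux_mem_mul3.mpr ⟨x, hN₀N x.2, 1, K.one_mem, by group⟩, ?_⟩
    rw [himage_coset]
    apply aux_coset_eq
    -- goal : (σ ((x:G) * g))⁻¹ * ((x:G) * g) ∈ K
    have e : (σ ((x : G) * g))⁻¹ * ((x : G) * g)
        = k₀⁻¹ * (g⁻¹ * (n⁻¹ * (σ (x : G))⁻¹ * (x : G)) * g) := by
      rw [map_mul, hσg]
      group
    rw [e]
    exact K.mul_mem (K.inv_mem hk₀) hfixG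
  refine ⟨part_i, part_ii σ hσc hσ2 p hp hodd K hKo hKσ N hNσ hNpro g, ?_⟩
  -- ===== Part (iii) =====
  have h1K : ({(1 : G)} : Set G) * (K : Set G) = (K : Set G) := by
    rw [Set.singleton_mul]
    ext y
    simp
  apply Set.Subset.antisymm
  · rintro x ⟨hxNK, hxσ⟩
    obtain ⟨n₀, hn₀, k₀, hk₀, hx⟩ := Set.mem_mul.mp hxNK
    have hres := part_ii σ hσc hσ2 p hp hodd K hKo hKσ N hNσ hNpro 1
      (by rw [h1K, hKim]) x
      (by
        intro y hy
        rw [aux_mem_coset] at hy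
        refine aux_mem_mul3.mpr ⟨n₀, hn₀, k₀ * (x⁻¹ * y), K.mul_mem hk₀ hy, ?_⟩
        rw [← hx]
        group)
      (by rw [himage_coset, hxσ])
    obtain ⟨n', ⟨hn'N, hn'σ⟩, k', hk', hxe⟩ := aux_mem_mul3.mp hres
    have hxe' : x = n' * k' := by rw [hxe]; group
    refine Set.mem_mul.mpr ⟨n', ⟨hn'N, hn'σ⟩, k', ⟨hk', ?_⟩, hxe'.symm⟩
    -- σ k' = k'
    have : σ k' = k' := by
      have h1 : σ x = σ n' * σ k' := by rw [hxe', map_mul]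
      rw [hxσ, hxe', hn'σ] at h1
      exact mul_left_cancel h1.symm
    exact this
  · rintro _ ⟨y, ⟨hyN, hyσ⟩, k, ⟨hkK, hkσ⟩, rfl⟩
    exact ⟨Set.mem_mul.mpr ⟨y, hyN, k, hkK, rfl⟩, by rw [map_mul, hyσ, hkσ]⟩
end

section
/- Let F₀ be a non-archimedean local field with ring of integers O₀ and maximal ideal p₀. Let P^σ ⊆ GL_n(F₀) be the mirabolic subgroup (matrices with last row (0,…,0,1)) and K^σ = GL_n(O₀). Then P^σ K^σ consists precisely of those matrices g ∈ GL_n(F₀) whose last row lies in O₀^n but not in p₀^n, i.e. all entries of the last row are integral and at least one is a unit. -/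
open Matrix

section Stmt9Aux

variable {F : Type*} [Field F] {n : ℕ}

/-- Permutation matrix of the swap of `j` with `Fin.last n`. -/
private def pmat (j : Fin (n + 1)) : Matrix (Fin (n + 1)) (Fin (n + 1)) F :=
  Matrix.of fun a b => if Equiv.swap j (Fin.last n) a = b then 1 else 0

/-- Identity matrix with last row replaced by `v ∘ swap j last`. -/
private def amat (j : Fin (n + 1)) (v : Fin (n + 1) → F) :
    Matrix (Fin (n + 1)) (Fin (n + 1)) F :=
  Matrix.of fun a b =>
    if a = Fin.last n then v (Equiv.swap j (Fin.last n) b)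
    else if a = b then 1 else 0

/-- Explicit inverse of `amat j v` when `v j * y = 1`. -/
private def bmat (j : Fin (n + 1)) (v : Fin (n + 1) → F) (y : F) :
    Matrix (Fin (n + 1)) (Fin (n + 1)) F :=
  Matrix.of fun a b =>
    if a = Fin.last n then
      (if b = Fin.last n then y else -(y * v (Equiv.swap j (Fin.last n) b)))
    else if a = b then 1 else 0

private lemma pmat_mul_pmat (j : Fin (n + 1)) :
    (pmat j : Matrix (Fin (n + 1)) (Fin (n + 1)) F) * pmat j = 1 := by
  ext a c
  rw [Matrix.mul_apply]
  have h : ∀ b, (pmat j : Matrix (Fin (n + 1)) (Fin (n + 1)) F) a b * pmat j b c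
      = if Equiv.swap j (Fin.last n) a = b
        then (if Equiv.swap j (Fin.last n) b = c then (1 : F) else 0) else 0 := by
    intro b
    by_cases h1 : Equiv.swap j (Fin.last n) a = b <;>
      by_cases h2 : Equiv.swap j (Fin.last n) b = c <;> simp [pmat, h1, h2]
  simp only [h]
  rw [Finset.sum_ite_eq _ _ _, if_pos (Finset.mem_univ _), Equiv.swap_apply_self]
  simp [Matrix.one_apply]

private lemma amat_mul_bmat (j : Fin (n + 1)) (v : Fin (n + 1) → F) (y : F)
    (h : v j * y = 1) :
    (amat j v : Matrix (Fin (n + 1)) (Fin (n + 1)) F) * bmat j v y = 1 := by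
  have hsL : Equiv.swap j (Fin.last n) (Fin.last n) = j := Equiv.swap_apply_right j _
  ext a c
  rw [Matrix.mul_apply]
  by_cases ha : a = Fin.last n
  · subst ha
    rw [← Finset.add_sum_erase _ _ (Finset.mem_univ (Fin.last n))]
    have hrest : ∀ b ∈ Finset.univ.erase (Fin.last n),
        amat j v (Fin.last n) b * bmat j v y b c
          = if b = c then amat j v (Fin.last n) b else 0 := by
      intro b hb
      have hbL : b ≠ Fin.last n := (Finset.mem_erase.mp hb).1
      simp [amat, bmat, hbL, mul_ite]
    rw [Finset.sum_congr rfl hrest, Finset.sum_ite_eq' _ c _]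
    by_cases hc : c = Fin.last n
    · subst hc
      simp [amat, bmat, hsL, h, Matrix.one_apply]
    · have hc' : c ∈ Finset.univ.erase (Fin.last n) :=
        Finset.mem_erase.mpr ⟨hc, Finset.mem_univ c⟩
      simp only [amat, bmat, Matrix.of_apply, if_pos rfl, if_neg hc, hc', if_true, hsL]
      rw [Matrix.one_apply_ne' (by simpa [eq_comm] using hc)]
      have h2 : v j * (y * v (Equiv.swap j (Fin.last n) c))
          = v (Equiv.swap j (Fin.last n) c) := by
        rw [← mul_assoc, h, one_mul]
      rw [mul_neg, h2]
      ring
  · have hrest : ∀ b, amat j v a b * bmat j v y b c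
        = if a = b then bmat j v y b c else 0 := by
      intro b
      simp [amat, ha, ite_mul]
    simp only [hrest]
    rw [Finset.sum_ite_eq _ a _, if_pos (Finset.mem_univ a)]
    by_cases hac : a = c
    · subst hac
      simp [bmat, ha, Matrix.one_apply]
    · simp [bmat, ha, hac, Matrix.one_apply, Ne.symm hac]

private lemma bmat_mul_amat (j : Fin (n + 1)) (v : Fin (n + 1) → F) (y : F)
    (h : v j * y = 1) :
    (bmat j v y : Matrix (Fin (n + 1)) (Fin (n + 1)) F) * amat j v = 1 := by
  have hsL : Equiv.swap j (Fin.last n) (Fin.last n) = j := Equiv.swap_apply_right j _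
  ext a c
  rw [Matrix.mul_apply]
  by_cases ha : a = Fin.last n
  · subst ha
    rw [← Finset.add_sum_erase _ _ (Finset.mem_univ (Fin.last n))]
    have hrest : ∀ b ∈ Finset.univ.erase (Fin.last n),
        bmat j v y (Fin.last n) b * amat j v b c
          = if b = c then bmat j v y (Fin.last n) b else 0 := by
      intro b hb
      have hbL : b ≠ Fin.last n := (Finset.mem_erase.mp hb).1
      simp [amat, bmat, hbL, mul_ite]
    rw [Finset.sum_congr rfl hrest, Finset.sum_ite_eq' _ c _]
    by_cases hc : c = Fin.last n
    · subst hc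
      simp only [bmat, amat, Matrix.of_apply, if_pos rfl, hsL]
      rw [mul_comm] at h
      simp [h, Matrix.one_apply]
    · have hc' : c ∈ Finset.univ.erase (Fin.last n) :=
        Finset.mem_erase.mpr ⟨hc, Finset.mem_univ c⟩
      simp only [bmat, amat, Matrix.of_apply, if_pos rfl, if_neg hc, hc', if_true, hsL]
      rw [Matrix.one_apply_ne' (by simpa [eq_comm] using hc)]
      ring
  · have hrest : ∀ b, bmat j v y a b * amat j v b c
        = if a = b then amat j v b c else 0 := by
      intro b
      simp [bmat, ha, ite_mul]
    simp only [hrest]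
    rw [Finset.sum_ite_eq _ a _, if_pos (Finset.mem_univ a)]
    by_cases hac : a = c
    · subst hac
      simp [amat, ha, Matrix.one_apply]
    · simp [amat, ha, hac, Matrix.one_apply, Ne.symm hac]

private lemma amat_mul_pmat_last (j : Fin (n + 1)) (v : Fin (n + 1) → F) (m : Fin (n + 1)) :
    (amat j v * pmat j : Matrix (Fin (n + 1)) (Fin (n + 1)) F) (Fin.last n) m = v m := by
  rw [Matrix.mul_apply]
  have h : ∀ b, amat j v (Fin.last n) b * (pmat j : Matrix (Fin (n + 1)) (Fin (n + 1)) F) b m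
      = (fun t => if t = m then v t else 0) (Equiv.swap j (Fin.last n) b) := by
    intro b
    simp [amat, pmat, mul_ite]
  simp only [h]
  rw [Equiv.sum_comp (Equiv.swap j (Fin.last n)) (fun t => if t = m then v t else 0)]
  rw [Finset.sum_ite_eq' _ m _]
  simp

private lemma sum_isUnit {R : Type*} [CommRing R] [IsLocalRing R] {ι : Type*}
    (s : Finset ι) (f : ι → R) (h : IsUnit (∑ i ∈ s, f i)) : ∃ i ∈ s, IsUnit (f i) := by
  classical
  induction s using Finset.induction_on with
  | empty =>
    rw [Finset.sum_empty] at h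
    exact absurd (isUnit_zero_iff.mp h) zero_ne_one
  | @insert a s' hx ih =>
    rw [Finset.sum_insert hx] at h
    rcases IsLocalRing.isUnit_or_isUnit_of_isUnit_add h with h1 | h2
    · exact ⟨a, Finset.mem_insert_self a s', h1⟩
    · obtain ⟨i, hi, hu⟩ := ih h2
      exact ⟨i, Finset.mem_insert_of_mem hi, hu⟩

end Stmt9Aux

/-- For a non-archimedean local field F₀ with ring of integers O, the set
P^σ·K^σ (mirabolic times GL_n(O)) consists exactly of the matrices in GL_n(F₀) whose
last row has all entries integral and at least one entry a unit of O. -/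
theorem stmt_9 (F : Type*) [Field F] (O : ValuationSubring F)
    [IsDiscreteValuationRing ↥O] (n : ℕ) :
    {g : GL (Fin (n + 1)) F | ∃ p k : GL (Fin (n + 1)) F,
        (∀ j, (p : Matrix (Fin (n + 1)) (Fin (n + 1)) F) (Fin.last n) j
          = if j = Fin.last n then 1 else 0) ∧
        (∀ i j, (k : Matrix (Fin (n + 1)) (Fin (n + 1)) F) i j ∈ O) ∧
        (∀ i j, ((k⁻¹ : GL (Fin (n + 1)) F) : Matrix (Fin (n + 1)) (Fin (n + 1)) F) i j ∈ O) ∧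
        g = p * k}
    = {g : GL (Fin (n + 1)) F |
        (∀ j, (g : Matrix (Fin (n + 1)) (Fin (n + 1)) F) (Fin.last n) j ∈ O) ∧
        ∃ j, ∃ y ∈ O, (g : Matrix (Fin (n + 1)) (Fin (n + 1)) F) (Fin.last n) j * y = 1} := by
  classical
  ext g
  simp only [Set.mem_setOf_eq]
  constructor
  · rintro ⟨p, k, hp, hk, hki, rfl⟩
    have hrow : ∀ c, ((p * k : GL (Fin (n + 1)) F) :
        Matrix (Fin (n + 1)) (Fin (n + 1)) F) (Fin.last n) c
        = (k : Matrix (Fin (n + 1)) (Fin (n + 1)) F) (Fin.last n) c := by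
      intro c
      have hmul : ((p * k : GL (Fin (n + 1)) F) : Matrix (Fin (n + 1)) (Fin (n + 1)) F)
          = (p : Matrix (Fin (n + 1)) (Fin (n + 1)) F) * k := rfl
      rw [hmul, Matrix.mul_apply]
      simp only [hp, ite_mul, one_mul, zero_mul]
      rw [Finset.sum_ite_eq' _ (Fin.last n) _]
      simp
    refine ⟨fun c => by rw [hrow c]; exact hk (Fin.last n) c, ?_⟩
    -- find a unit entry in the last row of k
    set a : Fin (n + 1) → O := fun c =>
      (⟨(k : Matrix (Fin (n + 1)) (Fin (n + 1)) F) (Fin.last n) c, hk (Fin.last n) c⟩ : O) *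
      (⟨((k⁻¹ : GL (Fin (n + 1)) F) : Matrix (Fin (n + 1)) (Fin (n + 1)) F) c (Fin.last n),
        hki c (Fin.last n)⟩ : O)
      with ha
    have hsum : (∑ c, a c) = 1 := by
      apply Subtype.ext
      push_cast [ha]
      rw [← Matrix.coe_units_inv]
      rw [show (∑ x, (k : Matrix (Fin (n + 1)) (Fin (n + 1)) F) (Fin.last n) x *
          ((k⁻¹ : GL (Fin (n + 1)) F) : Matrix (Fin (n + 1)) (Fin (n + 1)) F) x (Fin.last n))
          = ((k : Matrix (Fin (n + 1)) (Fin (n + 1)) F) *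
            ((k⁻¹ : GL (Fin (n + 1)) F) : Matrix (Fin (n + 1)) (Fin (n + 1)) F))
              (Fin.last n) (Fin.last n) from (Matrix.mul_apply).symm]
      rw [show ((k : Matrix (Fin (n + 1)) (Fin (n + 1)) F) *
          ((k⁻¹ : GL (Fin (n + 1)) F) : Matrix (Fin (n + 1)) (Fin (n + 1)) F))
          = (1 : Matrix (Fin (n + 1)) (Fin (n + 1)) F) from k.mul_inv]
      simp [Matrix.one_apply]
    have hunit : IsUnit (∑ c, a c) := by rw [hsum]; exact isUnit_one
    obtain ⟨c, -, hc⟩ := sum_isUnit Finset.univ a hunit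
    obtain ⟨u, hu⟩ := hc
    refine ⟨c, ((k⁻¹ : GL (Fin (n + 1)) F) :
        Matrix (Fin (n + 1)) (Fin (n + 1)) F) c (Fin.last n) * ((u⁻¹ : Oˣ) : O), ?_, ?_⟩
    · exact O.mul_mem _ _ (hki c (Fin.last n)) ((u⁻¹ : Oˣ) : O).2
    · rw [hrow c]
      have h0 : ((u : O) * ((u⁻¹ : Oˣ) : O)) = 1 := u.mul_inv
      have h1 : ((a c : O) : F) * (((u⁻¹ : Oˣ) : O) : F) = 1 := by
        rw [← hu]
        exact_mod_cast h0
      have h2 : ((a c : O) : F) = (k : Matrix (Fin (n + 1)) (Fin (n + 1)) F) (Fin.last n) c *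
          ((k⁻¹ : GL (Fin (n + 1)) F) : Matrix (Fin (n + 1)) (Fin (n + 1)) F) c (Fin.last n) := by
        rw [ha]
        norm_cast
      rw [← mul_assoc, ← h2, h1]
  · rintro ⟨hint, j, y, hy, hyu⟩
    set v : Fin (n + 1) → F :=
      fun c => (g : Matrix (Fin (n + 1)) (Fin (n + 1)) F) (Fin.last n) c with hv
    have hvj : v j * y = 1 := hyu
    set K : Matrix (Fin (n + 1)) (Fin (n + 1)) F := amat j v * pmat j with hKdef
    set Kinv : Matrix (Fin (n + 1)) (Fin (n + 1)) F := pmat j * bmat j v y with hKidef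
    have hK1 : K * Kinv = 1 := by
      rw [hKdef, hKidef, Matrix.mul_assoc, ← Matrix.mul_assoc (pmat j),
        pmat_mul_pmat, Matrix.one_mul, amat_mul_bmat j v y hvj]
    have hK2 : Kinv * K = 1 := by
      rw [hKdef, hKidef, Matrix.mul_assoc, ← Matrix.mul_assoc (bmat j v y),
        bmat_mul_amat j v y hvj, Matrix.one_mul, pmat_mul_pmat]
    set k : GL (Fin (n + 1)) F := ⟨K, Kinv, hK1, hK2⟩ with hk
    have hkinv : ((k⁻¹ : GL (Fin (n + 1)) F) :
        Matrix (Fin (n + 1)) (Fin (n + 1)) F) = Kinv := rfl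
    have hkval : (k : Matrix (Fin (n + 1)) (Fin (n + 1)) F) = K := rfl
    refine ⟨g * k⁻¹, k, ?_, ?_, ?_, by rw [inv_mul_cancel_right]⟩
    · intro c
      have hval : ((g * k⁻¹ : GL (Fin (n + 1)) F) :
          Matrix (Fin (n + 1)) (Fin (n + 1)) F)
          = (g : Matrix (Fin (n + 1)) (Fin (n + 1)) F) * Kinv := rfl
      rw [hval, Matrix.mul_apply]
      have hrepl : ∀ m, (g : Matrix (Fin (n + 1)) (Fin (n + 1)) F) (Fin.last n) m * Kinv m c
          = K (Fin.last n) m * Kinv m c := by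
        intro m
        rw [hKdef, amat_mul_pmat_last j v m]
      rw [Finset.sum_congr rfl fun m _ => hrepl m, ← Matrix.mul_apply, hK1,
        Matrix.one_apply]
      simp [eq_comm]
    · intro i c
      rw [hkval, hKdef, Matrix.mul_apply]
      apply sum_mem
      intro b _
      apply O.mul_mem
      · by_cases h1 : i = Fin.last n
        · have : amat j v i b = v (Equiv.swap j (Fin.last n) b) := by simp [amat, h1]
          rw [this, hv]
          exact hint _
        · by_cases h2 : i = b
          · subst h2; simp [amat, h1, O.one_mem]
          · simp [amat, h1, h2, O.zero_mem]
      · by_cases h3 : Equiv.swap j (Fin.last n) b = c <;>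
          simp [pmat, h3, O.one_mem, O.zero_mem]
    · intro i c
      rw [hkinv, hKidef, Matrix.mul_apply]
      apply sum_mem
      intro b _
      apply O.mul_mem
      · by_cases h3 : Equiv.swap j (Fin.last n) i = b <;>
          simp [pmat, h3, O.one_mem, O.zero_mem]
      · by_cases h1 : b = Fin.last n
        · subst h1
          by_cases h2 : c = Fin.last n
          · have : bmat j v y (Fin.last n) c = y := by simp [bmat, h2]
            rw [this]; exact hy
          · have : bmat j v y (Fin.last n) c
                = -(y * v (Equiv.swap j (Fin.last n) c)) := by simp [bmat, h2]
            rw [this, hv]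
            exact O.neg_mem _ (O.mul_mem _ _ hy (hint _))
        · by_cases h2 : b = c
          · subst h2; simp [bmat, h1, O.one_mem]
          · simp [bmat, h1, h2, O.zero_mem]
end
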